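/- Let L > 0, κ > 0, let w, w' : [0,L] → ℝ be continuous, and let μ be a finite Borel measure on [0,L] with total mass η := μ([0,L]) satisfying 0 < η ≤ 1. Let p* and p*' be, respectively, the unique fixed points of Ψ_{w,μ} and Ψ_{w',μ} in C([0,L]). Then sup_{x∈[0,L]} |p*(x) − p*'(x)| ≤ ((1+κ)/2)·sup_{x∈[0,L]} |w(x) − w'(x)|. -/

import Mathlib

open MeasureTheory

/-- The market-price map `Ψ_{w,μ}(p)(x) = a + c·p̄ − (1/2)(a + c·p̄ − w(x))⁺`,
with `η = μ([0,L])`, `a = 1/(1+κη)`, `c = 1 − a` and `p̄ = (1/η)∫ p dμ`. -/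
noncomputable def Psi (L κ : ℝ) (w : C(Set.Icc (0:ℝ) L, ℝ))
    (μ : Measure (Set.Icc (0:ℝ) L)) (p : C(Set.Icc (0:ℝ) L, ℝ))
    (x : Set.Icc (0:ℝ) L) : ℝ :=
  let η : ℝ := (μ Set.univ).toReal
  let a : ℝ := 1 / (1 + κ * η)
  let c : ℝ := 1 - a
  let pbar : ℝ := (1 / η) * ∫ y, p y ∂μ
  a + c * pbar - (1 / 2) * max (a + c * pbar - w x) 0

lemma key_ineq (A A' u v : ℝ) :
    |(A - (1/2) * max (A - u) 0) - (A' - (1/2) * max (A' - v) 0)| ≤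
      |A - A'| + (1/2) * |u - v| := by
  have h1 := le_abs_self (A - A')
  have h2 := neg_abs_le (A - A')
  have h3 := le_abs_self (u - v)
  have h4 := neg_abs_le (u - v)
  rcases le_total (A - u) 0 with h | h <;> rcases le_total (A' - v) 0 with h' | h' <;>
    rw [abs_sub_le_iff] <;> constructor <;>
    simp only [max_eq_right h, max_eq_right h', max_eq_left h, max_eq_left h'] <;>
    linarith

/-- Stability of the market price in `w`:
`‖p* − p*'‖_∞ ≤ ((1+κ)/2)·‖w − w'‖_∞`. -/
theorem Psi_fixedPoint_stability_in_w (L κ : ℝ) (hL : 0 < L) (hκ : 0 < κ)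
    (w w' : C(Set.Icc (0:ℝ) L, ℝ))
    (μ : Measure (Set.Icc (0:ℝ) L)) [IsFiniteMeasure μ]
    (hη : 0 < (μ Set.univ).toReal) (hη1 : (μ Set.univ).toReal ≤ 1)
    (pstar pstar' : C(Set.Icc (0:ℝ) L, ℝ))
    (hfix : ∀ x : Set.Icc (0:ℝ) L, Psi L κ w μ pstar x = pstar x)
    (hfix' : ∀ x : Set.Icc (0:ℝ) L, Psi L κ w' μ pstar' x = pstar' x) :
    (⨆ x : Set.Icc (0:ℝ) L, |pstar x - pstar' x|) ≤
      ((1 + κ) / 2) * ⨆ x : Set.Icc (0:ℝ) L, |w x - w' x| := by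
  set η : ℝ := (μ Set.univ).toReal with hηdef
  set a : ℝ := 1 / (1 + κ * η) with hadef
  set c : ℝ := 1 - a with hcdef
  have hden : 0 < 1 + κ * η := by positivity
  have ha : 0 < a := by positivity
  have ha1 : a ≤ 1 := by
    rw [hadef, div_le_one hden]; nlinarith
  have hc0 : 0 ≤ c := by simp [hcdef]; linarith
  set M : ℝ := ‖pstar - pstar'‖ with hM
  set W : ℝ := ‖w - w'‖ with hW
  have hM0 : 0 ≤ M := norm_nonneg _
  have hW0 : 0 ≤ W := norm_nonneg _
  -- integrability
  have hint : Integrable (fun y => pstar y - pstar' y) μ :=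
    ((pstar.continuous.sub pstar'.continuous).integrable_of_hasCompactSupport
      (HasCompactSupport.of_compactSpace _))
  have hint1 : Integrable (fun y => pstar y) μ :=
    (pstar.continuous.integrable_of_hasCompactSupport (HasCompactSupport.of_compactSpace _))
  have hint2 : Integrable (fun y => pstar' y) μ :=
    (pstar'.continuous.integrable_of_hasCompactSupport (HasCompactSupport.of_compactSpace _))
  -- bound on difference of means
  set pbar : ℝ := (1 / η) * ∫ y, pstar y ∂μ with hpbar
  set pbar' : ℝ := (1 / η) * ∫ y, pstar' y ∂μ with hpbar'
  have hbarle : |pbar - pbar'| ≤ M := by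
    have hdiff : pbar - pbar' = (1 / η) * ∫ y, (pstar y - pstar' y) ∂μ := by
      rw [hpbar, hpbar', integral_sub hint1 hint2]; ring
    have hnorm : ‖∫ y, (pstar y - pstar' y) ∂μ‖ ≤ M * η := by
      apply norm_integral_le_of_norm_le_const
      filter_upwards with y
      have := ContinuousMap.norm_coe_le_norm (pstar - pstar') y
      simpa using this
    rw [hdiff, abs_mul, abs_of_pos (by positivity : (0:ℝ) < 1 / η)]
    calc (1 / η) * |∫ y, (pstar y - pstar' y) ∂μ| ≤ (1 / η) * (M * η) := by
          apply mul_le_mul_of_nonneg_left _ (by positivity)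
          simpa [Real.norm_eq_abs] using hnorm
      _ = M := by field_simp
  -- pointwise bound
  have hpoint : ∀ x : Set.Icc (0:ℝ) L, |pstar x - pstar' x| ≤ c * M + (1/2) * W := by
    intro x
    have e1 : pstar x = (a + c * pbar) - (1/2) * max ((a + c * pbar) - w x) 0 := by
      rw [← hfix x]; simp only [Psi]; rfl
    have e2 : pstar' x = (a + c * pbar') - (1/2) * max ((a + c * pbar') - w' x) 0 := by
      rw [← hfix' x]; simp only [Psi]; rfl
    rw [e1, e2]
    have hk := key_ineq (a + c * pbar) (a + c * pbar') (w x) (w' x)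
    have hA : |(a + c * pbar) - (a + c * pbar')| = c * |pbar - pbar'| := by
      rw [show (a + c * pbar) - (a + c * pbar') = c * (pbar - pbar') by ring,
        abs_mul, abs_of_nonneg hc0]
    have hwx : |w x - w' x| ≤ W := by
      have := ContinuousMap.norm_coe_le_norm (w - w') x
      simpa [Real.norm_eq_abs] using this
    have hcb : c * |pbar - pbar'| ≤ c * M := mul_le_mul_of_nonneg_left hbarle hc0
    calc |((a + c * pbar) - (1/2) * max ((a + c * pbar) - w x) 0) -
          ((a + c * pbar') - (1/2) * max ((a + c * pbar') - w' x) 0)|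
        ≤ |(a + c * pbar) - (a + c * pbar')| + (1/2) * |w x - w' x| := hk
      _ ≤ c * M + (1/2) * W := by
          rw [hA]
          exact add_le_add hcb (mul_le_mul_of_nonneg_left hwx (by norm_num))
  -- norm inequality
  have hnormle : M ≤ c * M + (1/2) * W := by
    rw [hM]
    apply ContinuousMap.norm_le _ (by positivity) |>.mpr
    intro x
    simpa [Real.norm_eq_abs] using hpoint x
  have hMle : M ≤ ((1 + κ) / 2) * W := by
    have h1 : a * M ≤ (1/2) * W := by
      have hce : c = 1 - a := hcdef
      nlinarith
    have haa : a * (1 + κ * η) = 1 := by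
      rw [hadef]; field_simp
    have h2 := mul_le_mul_of_nonneg_left h1 hden.le
    have h5 : 0 ≤ κ * (1 - η) * W :=
      mul_nonneg (mul_nonneg hκ.le (by linarith)) hW0
    nlinarith [h2, haa, hW0]
  have hs1 : (⨆ x : Set.Icc (0:ℝ) L, |pstar x - pstar' x|) = M := by
    rw [hM, ContinuousMap.norm_eq_iSup_norm]
    simp [Real.norm_eq_abs]
  have hs2 : (⨆ x : Set.Icc (0:ℝ) L, |w x - w' x|) = W := by
    rw [hW, ContinuousMap.norm_eq_iSup_norm]
    simp [Real.norm_eq_abs]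
  rw [hs1, hs2]
  exact hMle
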